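/- Let i* be the minimum of K independent uniformly random samples (with replacement) from {1, …, n}, where K = k with probability 1−ε and K = k+1 with probability ε, for a natural number k ≥ 1 and ε ∈ [0,1) with k + ε > 1. Then P[i* ≤ i] = 1 − (1 − i/n)^k·(1 − ε·i/n) for every i ∈ {1, …, n}, and moreover P[i* ≤ i] > i/n for every i ∈ {1, …, n−1} (i.e., the choice distribution of the c-MultiQueue with c = k + ε satisfies condition (☆)). -/

import Mathlib

open MeasureTheory ProbabilityTheory
open scoped ENNReal NNReal

/-- **The choice distribution of the c-MultiQueue satisfies (☆) (Lemma 4).**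
Let `iStar` be the minimum of `K` independent uniform samples `X 0, X 1, …`
from `{1,…,n}`, where `K = k` with probability `1-ε` and `K = k+1` with
probability `ε` (`k ≥ 1`, `ε ∈ [0,1)`, `k + ε > 1`), independent of the
samples.  Then `P[iStar ≤ i] = 1 - (1 - i/n)^k (1 - ε·i/n)` for every
`i ∈ {1,…,n}`, and `P[iStar ≤ i] > i/n` for every `i ∈ {1,…,n-1}`. -/
theorem c_multiqueue_satisfies_star (n : ℕ) (hn : 1 ≤ n)
    (k : ℕ) (hk : 1 ≤ k) (ε : ℝ) (hε : ε ∈ Set.Ico (0 : ℝ) 1)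
    (hkε : 1 < (k : ℝ) + ε)
    (Ω : Type*) [MeasureSpace Ω] [IsProbabilityMeasure (ℙ : Measure Ω)]
    (X : ℕ → Ω → ℕ) (K : Ω → ℕ)
    (g : ℕ → Ω → ℕ) (hg0 : g 0 = K) (hgs : ∀ j, g (j + 1) = X j)
    (hindep : iIndepFun g ℙ)
    (hX : ∀ j, ∀ i ∈ Finset.Icc 1 n, (ℙ {ω | X j ω = i}) = 1 / n)
    (hXrange : ∀ j ω, X j ω ∈ Finset.Icc 1 n)
    (hKk : (ℙ {ω | K ω = k}) = ENNReal.ofReal (1 - ε))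
    (hKk1 : (ℙ {ω | K ω = k + 1}) = ENNReal.ofReal ε)
    (hKrange : ∀ ω, K ω = k ∨ K ω = k + 1)
    (iStar : Ω → ℕ)
    (hiStar : ∀ ω, iStar ω = sInf {m | ∃ j < K ω, X j ω = m}) :
    (∀ i ∈ Finset.Icc 1 n,
        (ℙ {ω | iStar ω ≤ i})
          = ENNReal.ofReal (1 - (1 - (i : ℝ) / n) ^ k * (1 - ε * i / n))) ∧
      (∀ i ∈ Finset.Icc 1 (n - 1),
        (i : ℝ) / n < (ℙ {ω | iStar ω ≤ i}).toReal) := by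
  obtain ⟨hε0, hε1⟩ := hε
  have hnR : (0:ℝ) < n := by exact_mod_cast hn
  -- cylinder set measure lemma
  have hcyl : ∀ (t : ℕ) (F : ℕ → Set ℕ),
      ℙ (⋂ j ∈ Finset.range t, g j ⁻¹' F j)
        = ∏ j ∈ Finset.range t, ℙ (g j ⁻¹' F j) :=
    fun t F => hindep.meas_biInter (fun j _ => ⟨F j, trivial, rfl⟩)
  -- key: measure of a K-cylinder times X-cylinders
  have key : ∀ (m : ℕ) (S : ℕ → Set ℕ) (t : ℕ),
      ℙ ({ω | K ω = m} ∩ ⋂ l ∈ Finset.range t, X l ⁻¹' S l)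
        = ℙ {ω | K ω = m} * ∏ l ∈ Finset.range t, ℙ (X l ⁻¹' S l) := by
    intro m S t
    have h1 : ({ω | K ω = m} ∩ ⋂ l ∈ Finset.range t, X l ⁻¹' S l)
        = ⋂ j ∈ Finset.range (t+1), g j ⁻¹'
            (fun j => if j = 0 then ({m} : Set ℕ) else S (j-1)) j := by
      ext ω
      simp only [Set.mem_inter_iff, Set.mem_iInter, Finset.mem_range,
        Set.mem_preimage, Set.mem_setOf_eq]
      constructor
      · rintro ⟨h0, hrest⟩ j hj
        match j with
        | 0 => simpa [hg0] using h0
        | l+1 =>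
          simp only [Nat.succ_ne_zero, if_false, Nat.add_sub_cancel, hgs]
          exact hrest l (by omega)
      · intro h
        refine ⟨?_, fun l hl => ?_⟩
        · have := h 0 (by omega); simpa [hg0] using this
        · have := h (l+1) (by omega)
          simpa [hgs, Nat.succ_ne_zero] using this
    rw [h1, hcyl, Finset.prod_range_succ']
    rw [mul_comm]
    congr 1
    · simp only [if_pos rfl, hg0]
      rfl
    · refine Finset.prod_congr rfl (fun l _ => ?_)
      simp [hgs, Nat.succ_ne_zero]
  -- exact measures of single-coordinate events
  have htwo : ∀ (u v a b : ℝ≥0∞), u ≤ a → v ≤ b → a + b = 1 → 1 ≤ u + v →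
      u = a ∧ v = b := by
    intro u v a b hu hv hab h1
    have hbt : b ≠ ⊤ := fun h => by simp [h] at hab
    have hat : a ≠ ⊤ := fun h => by simp [h] at hab
    have ha : a = 1 - b := by
      rw [← hab]; simp [ENNReal.add_sub_cancel_right hbt]
    have hb : b = 1 - a := by
      rw [← hab]; simp [ENNReal.add_sub_cancel_left hat]
    constructor
    · refine le_antisymm hu ?_
      rw [ha]
      calc 1 - b ≤ 1 - v := tsub_le_tsub_left hv 1
      _ ≤ u := by rw [tsub_le_iff_right]; exact h1
    · refine le_antisymm hv ?_
      rw [hb]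
      calc 1 - a ≤ 1 - u := tsub_le_tsub_left hu 1
      _ ≤ v := by rw [tsub_le_iff_right]; rwa [add_comm] at h1
  have hpart1 : ∀ i ∈ Finset.Icc 1 n,
      (ℙ {ω | iStar ω ≤ i})
        = ENNReal.ofReal (1 - (1 - (i : ℝ) / n) ^ k * (1 - ε * i / n)) := by
    intro i hi
    rw [Finset.mem_Icc] at hi
    obtain ⟨hi1, hin⟩ := hi
    -- real constants
    set xr : ℝ := (i : ℝ) / n with hxr
    set qr : ℝ := 1 - (i : ℝ) / n with hqr
    have hxr0 : 0 ≤ xr := by positivity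
    have hxr1 : xr ≤ 1 := by
      rw [hxr, div_le_one hnR]; exact_mod_cast hin
    have hqr0 : 0 ≤ qr := by rw [hqr]; linarith
    have hqr1 : qr ≤ 1 := by rw [hqr]; linarith [hxr0]
    -- single-coordinate probabilities
    have hXsplit : ∀ j : ℕ,
        ℙ (X j ⁻¹' Set.Iic i) = ENNReal.ofReal xr ∧
        ℙ (X j ⁻¹' Set.Ioi i) = ENNReal.ofReal qr := by
      intro j
      have hle : ℙ (X j ⁻¹' Set.Iic i) ≤ (Finset.Icc 1 i).card * (1 / n : ℝ≥0∞) := by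
        have hsub : X j ⁻¹' Set.Iic i ⊆ ⋃ t ∈ Finset.Icc 1 i, {ω | X j ω = t} := by
          intro ω hω
          have hr := hXrange j ω
          rw [Finset.mem_Icc] at hr
          simp only [Set.mem_iUnion, Set.mem_setOf_eq]
          exact ⟨X j ω, Finset.mem_Icc.2 ⟨hr.1, hω⟩, rfl⟩
        calc ℙ (X j ⁻¹' Set.Iic i) ≤ ℙ (⋃ t ∈ Finset.Icc 1 i, {ω | X j ω = t}) :=
              measure_mono hsub
        _ ≤ ∑ t ∈ Finset.Icc 1 i, ℙ {ω | X j ω = t} := measure_biUnion_finset_le _ _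
        _ = (Finset.Icc 1 i).card * (1 / n : ℝ≥0∞) := by
            rw [Finset.sum_congr rfl (fun t ht => hX j t ?_), Finset.sum_const,
              nsmul_eq_mul]
            rw [Finset.mem_Icc] at ht ⊢
            omega
      have hgt : ℙ (X j ⁻¹' Set.Ioi i) ≤ (Finset.Icc (i+1) n).card * (1 / n : ℝ≥0∞) := by
        have hsub : X j ⁻¹' Set.Ioi i ⊆ ⋃ t ∈ Finset.Icc (i+1) n, {ω | X j ω = t} := by
          intro ω hω
          have hr := hXrange j ω
          rw [Finset.mem_Icc] at hr
          simp only [Set.mem_iUnion, Set.mem_setOf_eq]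
          refine ⟨X j ω, Finset.mem_Icc.2 ⟨?_, hr.2⟩, rfl⟩
          exact hω
        calc ℙ (X j ⁻¹' Set.Ioi i) ≤ ℙ (⋃ t ∈ Finset.Icc (i+1) n, {ω | X j ω = t}) :=
              measure_mono hsub
        _ ≤ ∑ t ∈ Finset.Icc (i+1) n, ℙ {ω | X j ω = t} := measure_biUnion_finset_le _ _
        _ = (Finset.Icc (i+1) n).card * (1 / n : ℝ≥0∞) := by
            rw [Finset.sum_congr rfl (fun t ht => hX j t ?_), Finset.sum_const,
              nsmul_eq_mul]
            rw [Finset.mem_Icc] at ht ⊢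
            omega
      have hcard1 : (((Finset.Icc 1 i).card : ℝ≥0∞) * (1 / n : ℝ≥0∞)) = ENNReal.ofReal xr := by
        have : xr = ((i:ℝ)) / n := hxr
        rw [this, ENNReal.ofReal_div_of_pos hnR, ENNReal.ofReal_natCast,
          ENNReal.ofReal_natCast, Nat.card_Icc, mul_one_div]
        norm_num
      have hcard2 : (((Finset.Icc (i+1) n).card : ℝ≥0∞) * (1 / n : ℝ≥0∞)) = ENNReal.ofReal qr := by
        have hq : qr = ((n - i : ℕ) : ℝ) / n := by
          rw [hqr, Nat.cast_sub hin]
          field_simp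
        rw [hq, ENNReal.ofReal_div_of_pos hnR, ENNReal.ofReal_natCast,
          ENNReal.ofReal_natCast, Nat.card_Icc, mul_one_div]
        congr 2
        omega
      rw [hcard1] at hle
      rw [hcard2] at hgt
      have hsum : ENNReal.ofReal xr + ENNReal.ofReal qr = 1 := by
        rw [← ENNReal.ofReal_add hxr0 hqr0]
        rw [hxr, hqr]
        rw [show (i:ℝ)/n + (1 - (i:ℝ)/n) = 1 by ring]
        simp
      have hone : 1 ≤ ℙ (X j ⁻¹' Set.Iic i) + ℙ (X j ⁻¹' Set.Ioi i) := by
        have hcover : (Set.univ : Set Ω) = X j ⁻¹' Set.Iic i ∪ X j ⁻¹' Set.Ioi i := by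
          ext ω
          simp only [Set.mem_univ, Set.mem_union, Set.mem_preimage, Set.mem_Iic,
            Set.mem_Ioi, true_iff]
          omega
        calc (1:ℝ≥0∞) = ℙ (Set.univ : Set Ω) := (measure_univ).symm
        _ = ℙ (X j ⁻¹' Set.Iic i ∪ X j ⁻¹' Set.Ioi i) := by rw [← hcover]
        _ ≤ _ := measure_union_le _ _
      exact htwo _ _ _ _ hle hgt hsum hone
    have hXle : ∀ j, ℙ (X j ⁻¹' Set.Iic i) = ENNReal.ofReal xr := fun j => (hXsplit j).1
    have hXgt : ∀ j, ℙ (X j ⁻¹' Set.Ioi i) = ENNReal.ofReal qr := fun j => (hXsplit j).2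
    -- cylinder measure values
    have hC : ∀ (m : ℕ) (pm : ℝ≥0∞), ℙ {ω | K ω = m} = pm →
        ℙ ({ω | K ω = m} ∩ ⋂ l ∈ Finset.range m, X l ⁻¹' Set.Ioi i)
          = pm * (ENNReal.ofReal qr) ^ m := by
      intro m pm hpm
      rw [key m (fun _ => Set.Ioi i) m, hpm]
      congr 1
      rw [Finset.prod_congr rfl (fun l _ => hXgt l), Finset.prod_const,
        Finset.card_range]
    have hT : ∀ (m : ℕ) (pm : ℝ≥0∞), ℙ {ω | K ω = m} = pm → ∀ j : ℕ,
        ℙ ({ω | K ω = m} ∩ ⋂ l ∈ Finset.range (j+1),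
            X l ⁻¹' (if l = j then Set.Iic i else Set.Ioi i))
          = pm * (ENNReal.ofReal qr) ^ j * ENNReal.ofReal xr := by
      intro m pm hpm j
      rw [key m _ (j+1), hpm, Finset.prod_range_succ, if_pos rfl, hXle]
      have hmid : ∏ l ∈ Finset.range j,
          ℙ (X l ⁻¹' (if l = j then Set.Iic i else Set.Ioi i))
          = (ENNReal.ofReal qr) ^ j := by
        rw [Finset.prod_congr rfl (fun l hl => ?_), Finset.prod_const,
          Finset.card_range]
        rw [Finset.mem_range] at hl
        rw [if_neg (by omega), hXgt]
      rw [hmid, mul_assoc]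
    -- description of the event
    have hAdef : {ω | iStar ω ≤ i} = {ω | ∃ j, j < K ω ∧ X j ω ≤ i} := by
      ext ω
      simp only [Set.mem_setOf_eq, hiStar]
      have hne : {m | ∃ j < K ω, X j ω = m}.Nonempty := by
        refine ⟨X 0 ω, 0, ?_, rfl⟩
        rcases hKrange ω with h | h <;> omega
      constructor
      · intro h
        obtain ⟨j, hj, hx⟩ := Nat.sInf_mem hne
        exact ⟨j, hj, by omega⟩
      · rintro ⟨j, hj, hx⟩
        exact le_trans (Nat.sInf_le ⟨j, hj, rfl⟩) hx
    -- upper bound for the event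
    have hAsub : {ω | ∃ j, j < K ω ∧ X j ω ≤ i} ⊆
        (⋃ j ∈ Finset.range k, ({ω | K ω = k} ∩ ⋂ l ∈ Finset.range (j+1),
            X l ⁻¹' (if l = j then Set.Iic i else Set.Ioi i))) ∪
        (⋃ j ∈ Finset.range (k+1), ({ω | K ω = k+1} ∩ ⋂ l ∈ Finset.range (j+1),
            X l ⁻¹' (if l = j then Set.Iic i else Set.Ioi i))) := by
      intro ω hω
      classical
      have hex : ∃ j, j < K ω ∧ X j ω ≤ i := hω
      obtain ⟨hj0K, hj0le⟩ := Nat.find_spec hex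
      set j0 := Nat.find hex with hj0def
      have hmin : ∀ l, l < j0 → i < X l ω := by
        intro l hl
        by_contra hcon
        push_neg at hcon
        exact Nat.find_min hex hl ⟨by omega, hcon⟩
      have hmem : ω ∈ ⋂ l ∈ Finset.range (j0+1),
          X l ⁻¹' (if l = j0 then Set.Iic i else Set.Ioi i) := by
        simp only [Set.mem_iInter, Finset.mem_range, Set.mem_preimage]
        intro l hl
        by_cases hlj : l = j0
        · rw [if_pos hlj, hlj]; exact Set.mem_Iic.2 hj0le
        · rw [if_neg hlj]; exact Set.mem_Ioi.2 (hmin l (by omega))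
      rcases hKrange ω with hK | hK
      · exact Or.inl (Set.mem_biUnion (Finset.mem_range.2 (by omega)) ⟨hK, hmem⟩)
      · exact Or.inr (Set.mem_biUnion (Finset.mem_range.2 (by omega)) ⟨hK, hmem⟩)
    -- numeric bound for the union of T-cylinders
    have hTsum : ∀ (m : ℕ) (pr : ℝ), 0 ≤ pr →
        ℙ {ω | K ω = m} = ENNReal.ofReal pr →
        ℙ (⋃ j ∈ Finset.range m, ({ω | K ω = m} ∩ ⋂ l ∈ Finset.range (j+1),
            X l ⁻¹' (if l = j then Set.Iic i else Set.Ioi i)))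
          ≤ ENNReal.ofReal (pr * (1 - qr ^ m)) := by
      intro m pr hpr hpm
      calc ℙ (⋃ j ∈ Finset.range m, ({ω | K ω = m} ∩ ⋂ l ∈ Finset.range (j+1),
            X l ⁻¹' (if l = j then Set.Iic i else Set.Ioi i)))
          ≤ ∑ j ∈ Finset.range m, ℙ ({ω | K ω = m} ∩ ⋂ l ∈ Finset.range (j+1),
            X l ⁻¹' (if l = j then Set.Iic i else Set.Ioi i)) :=
            measure_biUnion_finset_le _ _
      _ = ∑ j ∈ Finset.range m, ENNReal.ofReal (pr * qr ^ j * xr) := by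
          refine Finset.sum_congr rfl (fun j hj => ?_)
          rw [hT m _ hpm j,
            ENNReal.ofReal_mul (mul_nonneg hpr (pow_nonneg hqr0 j)),
            ENNReal.ofReal_mul hpr, ENNReal.ofReal_pow hqr0]
      _ = ENNReal.ofReal (∑ j ∈ Finset.range m, pr * qr ^ j * xr) :=
          (ENNReal.ofReal_sum_of_nonneg (fun j _ => by positivity)).symm
      _ = ENNReal.ofReal (pr * (1 - qr ^ m)) := by
          congr 1
          have hgeo := geom_sum_mul qr m
          have hxq : xr = 1 - qr := by rw [hxr, hqr]; ring
          calc ∑ j ∈ Finset.range m, pr * qr ^ j * xr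
              = pr * ((∑ j ∈ Finset.range m, qr ^ j) * xr) := by
                rw [Finset.sum_mul, Finset.mul_sum]
                exact Finset.sum_congr rfl (fun j _ => by ring)
          _ = pr * (1 - qr ^ m) := by
                rw [hxq]
                linear_combination (-pr) * hgeo
    -- upper bound for the complement
    have hCsub : {ω | ∃ j, j < K ω ∧ X j ω ≤ i}ᶜ ⊆
        ({ω | K ω = k} ∩ ⋂ l ∈ Finset.range k, X l ⁻¹' Set.Ioi i) ∪
        ({ω | K ω = k+1} ∩ ⋂ l ∈ Finset.range (k+1), X l ⁻¹' Set.Ioi i) := by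
      intro ω hω
      simp only [Set.mem_compl_iff, Set.mem_setOf_eq, not_exists, not_and,
        not_le] at hω
      rcases hKrange ω with hK | hK
      · refine Or.inl ⟨hK, ?_⟩
        simp only [Set.mem_iInter, Finset.mem_range, Set.mem_preimage]
        intro l hl
        exact Set.mem_Ioi.2 (hω l (by omega))
      · refine Or.inr ⟨hK, ?_⟩
        simp only [Set.mem_iInter, Finset.mem_range, Set.mem_preimage]
        intro l hl
        exact Set.mem_Ioi.2 (hω l (by omega))
    have hCle : ℙ ({ω | ∃ j, j < K ω ∧ X j ω ≤ i}ᶜ)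
        ≤ ENNReal.ofReal ((1-ε) * qr ^ k + ε * qr ^ (k+1)) := by
      calc ℙ ({ω | ∃ j, j < K ω ∧ X j ω ≤ i}ᶜ)
          ≤ ℙ (({ω | K ω = k} ∩ ⋂ l ∈ Finset.range k, X l ⁻¹' Set.Ioi i) ∪
              ({ω | K ω = k+1} ∩ ⋂ l ∈ Finset.range (k+1), X l ⁻¹' Set.Ioi i)) :=
            measure_mono hCsub
      _ ≤ ℙ ({ω | K ω = k} ∩ ⋂ l ∈ Finset.range k, X l ⁻¹' Set.Ioi i) +
            ℙ ({ω | K ω = k+1} ∩ ⋂ l ∈ Finset.range (k+1), X l ⁻¹' Set.Ioi i) :=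
            measure_union_le _ _
      _ = ENNReal.ofReal ((1-ε) * qr ^ k + ε * qr ^ (k+1)) := by
            rw [hC k _ hKk, hC (k+1) _ hKk1,
              ENNReal.ofReal_add (mul_nonneg (by linarith) (pow_nonneg hqr0 k))
                (mul_nonneg hε0 (pow_nonneg hqr0 (k+1))),
              ENNReal.ofReal_mul (by linarith), ENNReal.ofReal_mul hε0,
              ENNReal.ofReal_pow hqr0, ENNReal.ofReal_pow hqr0]
    have hAle : ℙ {ω | ∃ j, j < K ω ∧ X j ω ≤ i}
        ≤ ENNReal.ofReal ((1-ε) * (1 - qr ^ k) + ε * (1 - qr ^ (k+1))) := by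
      have hq1k : qr ^ k ≤ 1 := pow_le_one₀ hqr0 hqr1
      have hq1k1 : qr ^ (k+1) ≤ 1 := pow_le_one₀ hqr0 hqr1
      calc ℙ {ω | ∃ j, j < K ω ∧ X j ω ≤ i}
          ≤ ℙ ((⋃ j ∈ Finset.range k, ({ω | K ω = k} ∩ ⋂ l ∈ Finset.range (j+1),
              X l ⁻¹' (if l = j then Set.Iic i else Set.Ioi i))) ∪
            (⋃ j ∈ Finset.range (k+1), ({ω | K ω = k+1} ∩ ⋂ l ∈ Finset.range (j+1),
              X l ⁻¹' (if l = j then Set.Iic i else Set.Ioi i)))) :=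
            measure_mono hAsub
      _ ≤ ℙ (⋃ j ∈ Finset.range k, ({ω | K ω = k} ∩ ⋂ l ∈ Finset.range (j+1),
              X l ⁻¹' (if l = j then Set.Iic i else Set.Ioi i))) +
            ℙ (⋃ j ∈ Finset.range (k+1), ({ω | K ω = k+1} ∩ ⋂ l ∈ Finset.range (j+1),
              X l ⁻¹' (if l = j then Set.Iic i else Set.Ioi i))) :=
            measure_union_le _ _
      _ ≤ ENNReal.ofReal ((1-ε) * (1 - qr ^ k)) + ENNReal.ofReal (ε * (1 - qr ^ (k+1))) :=
            add_le_add (hTsum k (1-ε) (by linarith) hKk) (hTsum (k+1) ε hε0 hKk1)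
      _ = ENNReal.ofReal ((1-ε) * (1 - qr ^ k) + ε * (1 - qr ^ (k+1))) :=
            (ENNReal.ofReal_add (by nlinarith) (by nlinarith)).symm
    -- sandwich
    have hq1k : qr ^ k ≤ 1 := pow_le_one₀ hqr0 hqr1
    have hq1k1 : qr ^ (k+1) ≤ 1 := pow_le_one₀ hqr0 hqr1
    have hcr0 : 0 ≤ (1-ε) * qr ^ k + ε * qr ^ (k+1) :=
      add_nonneg (mul_nonneg (by linarith) (pow_nonneg hqr0 k))
        (mul_nonneg hε0 (pow_nonneg hqr0 (k+1)))
    have hsum1 : (1:ℝ≥0∞) ≤ ℙ {ω | ∃ j, j < K ω ∧ X j ω ≤ i} +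
        ℙ ({ω | ∃ j, j < K ω ∧ X j ω ≤ i}ᶜ) := by
      calc (1:ℝ≥0∞) = ℙ (Set.univ : Set Ω) := measure_univ.symm
      _ = ℙ ({ω | ∃ j, j < K ω ∧ X j ω ≤ i} ∪ {ω | ∃ j, j < K ω ∧ X j ω ≤ i}ᶜ) := by
            rw [Set.union_compl_self]
      _ ≤ _ := measure_union_le _ _
    have hAge : ENNReal.ofReal ((1-ε) * (1 - qr ^ k) + ε * (1 - qr ^ (k+1)))
        ≤ ℙ {ω | ∃ j, j < K ω ∧ X j ω ≤ i} := by
      have har : (1-ε) * (1 - qr ^ k) + ε * (1 - qr ^ (k+1))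
          = 1 - ((1-ε) * qr ^ k + ε * qr ^ (k+1)) := by ring
      rw [har, ENNReal.ofReal_sub _ hcr0, ENNReal.ofReal_one]
      rw [tsub_le_iff_right]
      calc (1:ℝ≥0∞) ≤ ℙ {ω | ∃ j, j < K ω ∧ X j ω ≤ i} +
          ℙ ({ω | ∃ j, j < K ω ∧ X j ω ≤ i}ᶜ) := hsum1
      _ ≤ _ := add_le_add le_rfl hCle
    have hAeq : ℙ {ω | ∃ j, j < K ω ∧ X j ω ≤ i}
        = ENNReal.ofReal ((1-ε) * (1 - qr ^ k) + ε * (1 - qr ^ (k+1))) :=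
      le_antisymm hAle hAge
    rw [hAdef, hAeq]
    congr 1
    rw [hqr]
    ring
  refine ⟨hpart1, fun i hi => ?_⟩
  rw [Finset.mem_Icc] at hi
  obtain ⟨hi1, hin1⟩ := hi
  have hilt : i < n := by omega
  have h1 := hpart1 i (Finset.mem_Icc.2 ⟨hi1, by omega⟩)
  have hxr0 : 0 < (i:ℝ)/n := by
    have : (0:ℝ) < i := by exact_mod_cast hi1
    positivity
  have hxr1 : (i:ℝ)/n < 1 := by
    rw [div_lt_one hnR]; exact_mod_cast hilt
  set q : ℝ := 1 - (i:ℝ)/n with hq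
  clear_value q
  have hq0 : 0 < q := by rw [hq]; linarith
  have hq1 : q < 1 := by rw [hq]; linarith
  have hεx : ε * ↑i / ↑n = ε * ((i:ℝ)/n) := by ring
  have hqk1 : q ^ k ≤ 1 := pow_le_one₀ hq0.le hq1.le
  have hεx1 : ε * ((i:ℝ)/n) < 1 := by nlinarith
  have hkey : q ^ k * (1 - ε * ((i:ℝ)/n)) < q := by
    rcases eq_or_lt_of_le hε0 with hez | hep
    · have hkR : (1:ℝ) < k := by rw [← hez] at hkε; simpa using hkε
      have hk2 : 2 ≤ k := by exact_mod_cast hkR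
      have hqk2 : q ^ k ≤ q ^ 2 := pow_le_pow_of_le_one hq0.le hq1.le hk2
      rw [← hez]
      have hq2 : q ^ 2 < q := by nlinarith
      simpa using hqk2.trans_lt hq2
    · have h2 : q ^ k * (1 - ε * ((i:ℝ)/n)) < q ^ k * 1 := by
        apply mul_lt_mul_of_pos_left ?_ (pow_pos hq0 k)
        nlinarith
      have h3 : q ^ k ≤ q := pow_le_of_le_one hq0.le hq1.le (by omega)
      calc q ^ k * (1 - ε * ((i:ℝ)/n)) < q ^ k * 1 := h2
      _ = q ^ k := mul_one _
      _ ≤ q := h3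
  have hnn : (0:ℝ) ≤ 1 - q ^ k * (1 - ε * ↑i / ↑n) := by
    rw [hεx]
    nlinarith [pow_nonneg hq0.le k, hqk1, hεx1, mul_nonneg hε0 hxr0.le]
  rw [h1, ENNReal.toReal_ofReal hnn, hεx]
  linarith [hkey, hq]
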